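/- Let L ∈ Λ satisfy ⟨L,L⟩ = 1 and ⟨L,K⟩ = −3. Then for all D₁, D₂ ∈ Λ the following identity holds in Λ: ⟨D₁,D₂⟩·L + Σ_{(E,F)} ⟨E,D₁⟩⟨E,D₂⟩·F = ⟨L,D₁⟩·D₂ + Σ_{(E,F)} ⟨F,D₁⟩⟨E,D₂⟩·E, where both sums run over all pairs (E,F) with E a line class, F a fiber class, and E + F = L. -/

import Mathlib

/-- The Picard lattice of the cubic surface: free ℤ-module of rank 7
with basis h, e₁, …, e₆ (coordinates: index 0 ↦ coefficient of h,
index i+1 ↦ coefficient of eᵢ). -/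
abbrev Lam : Type := Fin 7 → ℤ

/-- The intersection form: ⟨h,h⟩ = 1, ⟨eᵢ,eᵢ⟩ = −1, distinct basis vectors orthogonal. -/
def ip (x y : Lam) : ℤ := x 0 * y 0 - ∑ i : Fin 6, x i.succ * y i.succ

/-- The canonical class K = −3h + e₁ + ⋯ + e₆. -/
def Kc : Lam := ![-3, 1, 1, 1, 1, 1, 1]

/-- A line class: x with ⟨x,x⟩ = −1 and ⟨x,K⟩ = −1. -/
def IsLine (x : Lam) : Prop := ip x x = -1 ∧ ip x Kc = -1

/-- A fiber class: x with ⟨x,x⟩ = 0 and ⟨x,K⟩ = −2. -/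
def IsFiber (x : Lam) : Prop := ip x x = 0 ∧ ip x Kc = -2

set_option maxHeartbeats 1000000

namespace Cubic

lemma ip_expand (x y : Lam) : ip x y =
    x 0 * y 0 - (x 1 * y 1 + x 2 * y 2 + x 3 * y 3 + x 4 * y 4 + x 5 * y 5 + x 6 * y 6) := by
  simp [ip, Fin.sum_univ_six]

lemma ip_comm (x y : Lam) : ip x y = ip y x := by
  rw [ip_expand, ip_expand]; ring

lemma ip_add_left (x y z : Lam) : ip (x + y) z = ip x z + ip y z := by
  rw [ip_expand, ip_expand, ip_expand]; simp [Pi.add_apply]; ring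

lemma ip_add_right (x y z : Lam) : ip x (y + z) = ip x y + ip x z := by
  rw [ip_comm, ip_add_left, ip_comm y, ip_comm z]

lemma ip_smul_left (c : ℤ) (x z : Lam) : ip (c • x) z = c * ip x z := by
  rw [ip_expand, ip_expand]; simp [Pi.smul_apply, smul_eq_mul]; ring

lemma ip_Kc_expand (x : Lam) : ip x Kc =
    -3 * x 0 - (x 1 + x 2 + x 3 + x 4 + x 5 + x 6) := by
  rw [ip_expand]
  have h0 : Kc 0 = -3 := rfl
  have h1 : Kc 1 = 1 := rfl
  have h2 : Kc 2 = 1 := rfl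
  have h3 : Kc 3 = 1 := rfl
  have h4 : Kc 4 = 1 := rfl
  have h5 : Kc 5 = 1 := rfl
  have h6 : Kc 6 = 1 := rfl
  rw [h0, h1, h2, h3, h4, h5, h6]; ring

/-- The set of pairs for a given L. -/
def S (L : Lam) : Set (Lam × Lam) :=
  {p : Lam × Lam | IsLine p.1 ∧ IsFiber p.2 ∧ p.1 + p.2 = L}

/-- The statement to prove, as a predicate on L. -/
def P (L : Lam) : Prop :=
  (S L).Finite ∧
    ∀ D₁ D₂ : Lam,
      ip D₁ D₂ • L + ∑ᶠ p ∈ S L, (ip p.1 D₁ * ip p.1 D₂) • p.2 =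
      ip L D₁ • D₂ + ∑ᶠ p ∈ S L, (ip p.2 D₁ * ip p.1 D₂) • p.1

def refl (r : Lam) : Lam →+ Lam :=
  AddMonoidHom.mk' (fun x => x + ip x r • r) (by
    intro x y
    have : ip (x + y) r = ip x r + ip y r := ip_add_left x y r
    simp [this, add_smul]
    abel)

variable {r : Lam}

lemma refl_apply (x : Lam) : refl r x = x + ip x r • r := rfl

lemma ip_refl_left (hr : ip r r = -2) (x y : Lam) : ip (refl r x) y = ip x y + ip x r * ip r y := by
  rw [refl_apply, ip_add_left, ip_smul_left]

lemma ip_refl_right (hr : ip r r = -2) (x y : Lam) :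
    ip x (refl r y) = ip x y + ip y r * ip x r := by
  rw [ip_comm, ip_refl_left hr, ip_comm y x, ip_comm r x]

lemma ip_refl_refl (hr : ip r r = -2) (x y : Lam) : ip (refl r x) (refl r y) = ip x y := by
  rw [ip_refl_left hr, ip_refl_right hr, ip_refl_right hr, hr, ip_comm r y]
  ring

lemma refl_refl (hr : ip r r = -2) (x : Lam) : refl r (refl r x) = x := by
  rw [refl_apply, refl_apply, ip_add_left, ip_smul_left, hr]
  have : ip x r + ip x r * -2 = -ip x r := by ring
  rw [this]
  simp [add_smul]

lemma refl_Kc (hrK : ip r Kc = 0) : refl r Kc = Kc := by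
  rw [refl_apply, ip_comm, hrK]; simp

lemma ip_refl_Kc (hr : ip r r = -2) (hrK : ip r Kc = 0) (x : Lam) :
    ip (refl r x) Kc = ip x Kc := by
  conv_lhs => rw [← refl_Kc (r := r) hrK]
  exact ip_refl_refl hr x Kc

lemma isLine_refl (hr : ip r r = -2) (hrK : ip r Kc = 0) (x : Lam) :
    IsLine (refl r x) ↔ IsLine x := by
  unfold IsLine
  rw [ip_refl_refl hr, ip_refl_Kc hr hrK]

lemma isFiber_refl (hr : ip r r = -2) (hrK : ip r Kc = 0) (x : Lam) :
    IsFiber (refl r x) ↔ IsFiber x := by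
  unfold IsFiber
  rw [ip_refl_refl hr, ip_refl_Kc hr hrK]

/-- The pair set for L is the image of the pair set for `refl r L`. -/
lemma S_eq_image (hr : ip r r = -2) (hrK : ip r Kc = 0) (L : Lam) :
    S L = (Prod.map (refl r) (refl r)) '' S (refl r L) := by
  ext p
  constructor
  · rintro ⟨h1, h2, h3⟩
    refine ⟨(refl r p.1, refl r p.2), ⟨?_, ?_, ?_⟩, ?_⟩
    · exact (isLine_refl hr hrK _).mpr h1
    · exact (isFiber_refl hr hrK _).mpr h2
    · show refl r p.1 + refl r p.2 = refl r L
      rw [← map_add, h3]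
    · show (refl r (refl r p.1), refl r (refl r p.2)) = p
      rw [refl_refl hr, refl_refl hr]
  · rintro ⟨q, ⟨h1, h2, h3⟩, rfl⟩
    refine ⟨(isLine_refl hr hrK _).mpr h1, (isFiber_refl hr hrK _).mpr h2, ?_⟩
    show refl r q.1 + refl r q.2 = L
    rw [← map_add, h3, refl_refl hr]

lemma refl_inj (hr : ip r r = -2) : Function.Injective (refl r) := by
  intro a b hab
  have := congrArg (refl r) hab
  rwa [refl_refl hr, refl_refl hr] at this

/-- Invariance of P under reflections. -/
lemma P_refl (hr : ip r r = -2) (hrK : ip r Kc = 0) (L : Lam)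
    (hP : P (refl r L)) : P L := by
  obtain ⟨hfin, hid⟩ := hP
  have hinj : Function.Injective (Prod.map (refl r) (refl r)) :=
    Function.Injective.prodMap (refl_inj hr) (refl_inj hr)
  have hSL : S L = (Prod.map (refl r) (refl r)) '' S (refl r L) := S_eq_image hr hrK L
  have hfinL : (S L).Finite := hSL ▸ hfin.image _
  refine ⟨hfinL, ?_⟩
  intro D₁ D₂
  have swap : ∀ x y : Lam, ip (refl r x) y = ip x (refl r y) := by
    intro x y
    conv_lhs => rw [← refl_refl hr y]
    exact ip_refl_refl hr x (refl r y)
  have sum1 : ∀ f : Lam × Lam → Lam,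
      ∑ᶠ p ∈ S L, f p = ∑ᶠ q ∈ S (refl r L), f (Prod.map (refl r) (refl r) q) := by
    intro f
    rw [hSL]
    exact finsum_mem_image (hinj.injOn)
  have happ := hid (refl r D₁) (refl r D₂)
  have happ2 := congrArg (refl r) happ
  rw [map_add, map_add] at happ2
  have movesum : ∀ (f : Lam × Lam → ℤ) (g : Lam × Lam → Lam),
      refl r (∑ᶠ q ∈ S (refl r L), f q • g q) = ∑ᶠ q ∈ S (refl r L), f q • refl r (g q) := by
    intro f g
    rw [finsum_mem_eq_finite_toFinset_sum _ hfin, finsum_mem_eq_finite_toFinset_sum _ hfin,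
      map_sum]
    exact Finset.sum_congr rfl fun q _ => map_zsmul (refl r) (f q) (g q)
  rw [movesum, movesum, map_zsmul, map_zsmul, refl_refl hr, refl_refl hr] at happ2
  rw [sum1 (fun p => (ip p.1 D₁ * ip p.1 D₂) • p.2),
    sum1 (fun p => (ip p.2 D₁ * ip p.1 D₂) • p.1)]
  have e1 : ip D₁ D₂ = ip (refl r D₁) (refl r D₂) := (ip_refl_refl hr D₁ D₂).symm
  have e2 : ip L D₁ = ip (refl r L) (refl r D₁) := by
    rw [ip_refl_refl hr]
  have g1 : ∑ᶠ q ∈ S (refl r L),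
      (fun p => (ip p.1 D₁ * ip p.1 D₂) • p.2) (Prod.map (refl r) (refl r) q) =
      ∑ᶠ q ∈ S (refl r L), (ip q.1 (refl r D₁) * ip q.1 (refl r D₂)) • refl r q.2 := by
    apply finsum_mem_congr rfl
    intro q hq
    simp only [Prod.map_fst, Prod.map_snd, swap]
  have g2 : ∑ᶠ q ∈ S (refl r L),
      (fun p => (ip p.2 D₁ * ip p.1 D₂) • p.1) (Prod.map (refl r) (refl r) q) =
      ∑ᶠ q ∈ S (refl r L), (ip q.2 (refl r D₁) * ip q.1 (refl r D₂)) • refl r q.1 := by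
    apply finsum_mem_congr rfl
    intro q hq
    simp only [Prod.map_fst, Prod.map_snd, swap]
  rw [g1, g2, e1, e2]
  exact happ2

def hv : Lam := ![1, 0, 0, 0, 0, 0, 0]

def el (i : Fin 6) : Lam := fun t => if t = i.succ then 1 else 0

lemma el_0_0 : el 0 0 = 0 := rfl
lemma el_0_1 : el 0 1 = 1 := rfl
lemma el_0_2 : el 0 2 = 0 := rfl
lemma el_0_3 : el 0 3 = 0 := rfl
lemma el_0_4 : el 0 4 = 0 := rfl
lemma el_0_5 : el 0 5 = 0 := rfl
lemma el_0_6 : el 0 6 = 0 := rfl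
lemma el_1_0 : el 1 0 = 0 := rfl
lemma el_1_1 : el 1 1 = 0 := rfl
lemma el_1_2 : el 1 2 = 1 := rfl
lemma el_1_3 : el 1 3 = 0 := rfl
lemma el_1_4 : el 1 4 = 0 := rfl
lemma el_1_5 : el 1 5 = 0 := rfl
lemma el_1_6 : el 1 6 = 0 := rfl
lemma el_2_0 : el 2 0 = 0 := rfl
lemma el_2_1 : el 2 1 = 0 := rfl
lemma el_2_2 : el 2 2 = 0 := rfl
lemma el_2_3 : el 2 3 = 1 := rfl
lemma el_2_4 : el 2 4 = 0 := rfl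
lemma el_2_5 : el 2 5 = 0 := rfl
lemma el_2_6 : el 2 6 = 0 := rfl
lemma el_3_0 : el 3 0 = 0 := rfl
lemma el_3_1 : el 3 1 = 0 := rfl
lemma el_3_2 : el 3 2 = 0 := rfl
lemma el_3_3 : el 3 3 = 0 := rfl
lemma el_3_4 : el 3 4 = 1 := rfl
lemma el_3_5 : el 3 5 = 0 := rfl
lemma el_3_6 : el 3 6 = 0 := rfl
lemma el_4_0 : el 4 0 = 0 := rfl
lemma el_4_1 : el 4 1 = 0 := rfl
lemma el_4_2 : el 4 2 = 0 := rfl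
lemma el_4_3 : el 4 3 = 0 := rfl
lemma el_4_4 : el 4 4 = 0 := rfl
lemma el_4_5 : el 4 5 = 1 := rfl
lemma el_4_6 : el 4 6 = 0 := rfl
lemma el_5_0 : el 5 0 = 0 := rfl
lemma el_5_1 : el 5 1 = 0 := rfl
lemma el_5_2 : el 5 2 = 0 := rfl
lemma el_5_3 : el 5 3 = 0 := rfl
lemma el_5_4 : el 5 4 = 0 := rfl
lemma el_5_5 : el 5 5 = 0 := rfl
lemma el_5_6 : el 5 6 = 1 := rfl
lemma hv_0 : hv 0 = 1 := rfl
lemma hv_1 : hv 1 = 0 := rfl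
lemma hv_2 : hv 2 = 0 := rfl
lemma hv_3 : hv 3 = 0 := rfl
lemma hv_4 : hv 4 = 0 := rfl
lemma hv_5 : hv 5 = 0 := rfl
lemma hv_6 : hv 6 = 0 := rfl

lemma lam_ext (x y : Lam) (h0 : x 0 = y 0) (h1 : x 1 = y 1) (h2 : x 2 = y 2)
    (h3 : x 3 = y 3) (h4 : x 4 = y 4) (h5 : x 5 = y 5) (h6 : x 6 = y 6) : x = y := by
  funext t; fin_cases t <;> assumption

lemma int_mul_pred_nonneg (a : ℤ) : 0 ≤ a * (a - 1) := by
  rcases le_or_gt a 0 with h|h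
  · nlinarith
  · nlinarith

lemma line_classify (E : Lam) (hEE : ip E E = -1) (hEK : ip E Kc = -1) (he0 : E 0 = 0) :
    ∃ i : Fin 6, E = el i := by
  rw [ip_expand, he0] at hEE
  rw [ip_Kc_expand, he0] at hEK
  have e1 : E 1 * (E 1 - 1) = E 1 * E 1 - E 1 := by ring
  have n1 := int_mul_pred_nonneg (E 1)
  have e2 : E 2 * (E 2 - 1) = E 2 * E 2 - E 2 := by ring
  have n2 := int_mul_pred_nonneg (E 2)
  have e3 : E 3 * (E 3 - 1) = E 3 * E 3 - E 3 := by ring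
  have n3 := int_mul_pred_nonneg (E 3)
  have e4 : E 4 * (E 4 - 1) = E 4 * E 4 - E 4 := by ring
  have n4 := int_mul_pred_nonneg (E 4)
  have e5 : E 5 * (E 5 - 1) = E 5 * E 5 - E 5 := by ring
  have n5 := int_mul_pred_nonneg (E 5)
  have e6 : E 6 * (E 6 - 1) = E 6 * E 6 - E 6 := by ring
  have n6 := int_mul_pred_nonneg (E 6)
  have z1 : E 1 * (E 1 - 1) = 0 := by linarith
  have z2 : E 2 * (E 2 - 1) = 0 := by linarith
  have z3 : E 3 * (E 3 - 1) = 0 := by linarith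
  have z4 : E 4 * (E 4 - 1) = 0 := by linarith
  have z5 : E 5 * (E 5 - 1) = 0 := by linarith
  have z6 : E 6 * (E 6 - 1) = 0 := by linarith
  have d1 : E 1 = 0 ∨ E 1 = 1 := by rcases mul_eq_zero.mp z1 with h|h <;> omega
  have d2 : E 2 = 0 ∨ E 2 = 1 := by rcases mul_eq_zero.mp z2 with h|h <;> omega
  have d3 : E 3 = 0 ∨ E 3 = 1 := by rcases mul_eq_zero.mp z3 with h|h <;> omega
  have d4 : E 4 = 0 ∨ E 4 = 1 := by rcases mul_eq_zero.mp z4 with h|h <;> omega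
  have d5 : E 5 = 0 ∨ E 5 = 1 := by rcases mul_eq_zero.mp z5 with h|h <;> omega
  have d6 : E 6 = 0 ∨ E 6 = 1 := by rcases mul_eq_zero.mp z6 with h|h <;> omega
  have l1a : 0 ≤ E 1 := by rcases d1 with h|h <;> simp [h]
  have l1b : E 1 ≤ 1 := by rcases d1 with h|h <;> simp [h]
  have l2a : 0 ≤ E 2 := by rcases d2 with h|h <;> simp [h]
  have l2b : E 2 ≤ 1 := by rcases d2 with h|h <;> simp [h]
  have l3a : 0 ≤ E 3 := by rcases d3 with h|h <;> simp [h]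
  have l3b : E 3 ≤ 1 := by rcases d3 with h|h <;> simp [h]
  have l4a : 0 ≤ E 4 := by rcases d4 with h|h <;> simp [h]
  have l4b : E 4 ≤ 1 := by rcases d4 with h|h <;> simp [h]
  have l5a : 0 ≤ E 5 := by rcases d5 with h|h <;> simp [h]
  have l5b : E 5 ≤ 1 := by rcases d5 with h|h <;> simp [h]
  have l6a : 0 ≤ E 6 := by rcases d6 with h|h <;> simp [h]
  have l6b : E 6 ≤ 1 := by rcases d6 with h|h <;> simp [h]
  have hsum : E 1 + E 2 + E 3 + E 4 + E 5 + E 6 = 1 := by linarith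
  clear hEE hEK e1 e2 e3 e4 e5 e6 n1 n2 n3 n4 n5 n6 z1 z2 z3 z4 z5 z6 d1 d2 d3 d4 d5 d6
  have hone : E 1 = 1 ∨ E 2 = 1 ∨ E 3 = 1 ∨ E 4 = 1 ∨ E 5 = 1 ∨ E 6 = 1 := by omega
  rcases hone with h|h|h|h|h|h
  exacts [⟨0, lam_ext E (el 0) (by rw [he0]; rfl) (by rw [h]; rfl) (by rw [show E 2 = 0 by linarith]; rfl) (by rw [show E 3 = 0 by linarith]; rfl) (by rw [show E 4 = 0 by linarith]; rfl) (by rw [show E 5 = 0 by linarith]; rfl) (by rw [show E 6 = 0 by linarith]; rfl)⟩,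
    ⟨1, lam_ext E (el 1) (by rw [he0]; rfl) (by rw [show E 1 = 0 by linarith]; rfl) (by rw [h]; rfl) (by rw [show E 3 = 0 by linarith]; rfl) (by rw [show E 4 = 0 by linarith]; rfl) (by rw [show E 5 = 0 by linarith]; rfl) (by rw [show E 6 = 0 by linarith]; rfl)⟩,
    ⟨2, lam_ext E (el 2) (by rw [he0]; rfl) (by rw [show E 1 = 0 by linarith]; rfl) (by rw [show E 2 = 0 by linarith]; rfl) (by rw [h]; rfl) (by rw [show E 4 = 0 by linarith]; rfl) (by rw [show E 5 = 0 by linarith]; rfl) (by rw [show E 6 = 0 by linarith]; rfl)⟩,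
    ⟨3, lam_ext E (el 3) (by rw [he0]; rfl) (by rw [show E 1 = 0 by linarith]; rfl) (by rw [show E 2 = 0 by linarith]; rfl) (by rw [show E 3 = 0 by linarith]; rfl) (by rw [h]; rfl) (by rw [show E 5 = 0 by linarith]; rfl) (by rw [show E 6 = 0 by linarith]; rfl)⟩,
    ⟨4, lam_ext E (el 4) (by rw [he0]; rfl) (by rw [show E 1 = 0 by linarith]; rfl) (by rw [show E 2 = 0 by linarith]; rfl) (by rw [show E 3 = 0 by linarith]; rfl) (by rw [show E 4 = 0 by linarith]; rfl) (by rw [h]; rfl) (by rw [show E 6 = 0 by linarith]; rfl)⟩,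
    ⟨5, lam_ext E (el 5) (by rw [he0]; rfl) (by rw [show E 1 = 0 by linarith]; rfl) (by rw [show E 2 = 0 by linarith]; rfl) (by rw [show E 3 = 0 by linarith]; rfl) (by rw [show E 4 = 0 by linarith]; rfl) (by rw [show E 5 = 0 by linarith]; rfl) (by rw [h]; rfl)⟩]

def TF : Finset (Lam × Lam) := Finset.univ.image (fun i : Fin 6 => (el i, hv - el i))

lemma pair_inj : ∀ i j : Fin 6, el i = el j → i = j := by decide

lemma S_hv : S hv = ↑TF := by
  ext p
  constructor
  · rintro ⟨⟨hEE, hEK⟩, ⟨hFF, hFK⟩, hsum⟩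
    have hF : p.2 = hv - p.1 := by rw [← hsum]; abel
    have h1 : ip hv hv = 1 := by rw [ip_expand]; decide
    rw [← hsum, ip_add_left, ip_add_right, ip_add_right, ip_comm p.2 p.1] at h1
    have hEF : ip p.1 p.2 = 1 := by linarith
    have hEh : ip p.1 hv = 0 := by
      rw [← hsum, ip_add_right, hEE, hEF]; ring
    have he0 : p.1 0 = 0 := by
      rw [ip_expand, hv_0, hv_1, hv_2, hv_3, hv_4, hv_5, hv_6] at hEh
      linarith
    obtain ⟨i, hi⟩ := line_classify p.1 hEE hEK he0
    have : p = (el i, hv - el i) := by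
      rw [Prod.ext_iff]; exact ⟨hi, by rw [hF, hi]⟩
    rw [this]
    simp only [TF, Finset.coe_image, Finset.coe_univ, Set.image_univ, Set.mem_range]
    exact ⟨i, rfl⟩
  · intro hp
    simp only [TF, Finset.coe_image, Finset.coe_univ, Set.image_univ, Set.mem_range] at hp
    obtain ⟨i, rfl⟩ := hp
    refine ⟨?_, ?_, by funext t; simp [Pi.add_apply, Pi.sub_apply]⟩
    · fin_cases i <;> exact ⟨by rw [ip_expand]; decide, by rw [ip_Kc_expand]; decide⟩
    · fin_cases i <;> exact ⟨by rw [ip_expand]; decide, by rw [ip_Kc_expand]; decide⟩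

lemma P_hv : P hv := by
  refine ⟨by rw [S_hv]; exact TF.finite_toSet, ?_⟩
  intro D₁ D₂
  rw [S_hv, finsum_mem_coe_finset, finsum_mem_coe_finset, TF,
    Finset.sum_image (fun i _ j _ hij => pair_inj i j (congrArg Prod.fst hij)),
    Finset.sum_image (fun i _ j _ hij => pair_inj i j (congrArg Prod.fst hij))]
  rw [Fin.sum_univ_six, Fin.sum_univ_six]
  apply lam_ext <;>
  · simp only [ip_expand, Pi.add_apply, Pi.sub_apply, Pi.smul_apply, smul_eq_mul,
      el_0_0, el_0_1, el_0_2, el_0_3, el_0_4, el_0_5, el_0_6,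
      el_1_0, el_1_1, el_1_2, el_1_3, el_1_4, el_1_5, el_1_6,
      el_2_0, el_2_1, el_2_2, el_2_3, el_2_4, el_2_5, el_2_6,
      el_3_0, el_3_1, el_3_2, el_3_3, el_3_4, el_3_5, el_3_6,
      el_4_0, el_4_1, el_4_2, el_4_3, el_4_4, el_4_5, el_4_6,
      el_5_0, el_5_1, el_5_2, el_5_3, el_5_4, el_5_5, el_5_6,
      hv_0, hv_1, hv_2, hv_3, hv_4, hv_5, hv_6]
    ring

def rt (i j k : Fin 6) : Lam :=
  fun t => if t = 0 then 1 else if t = i.succ ∨ t = j.succ ∨ t = k.succ then -1 else 0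

lemma rt_zero (i j k : Fin 6) : rt i j k 0 = 1 := by simp [rt]

lemma rt_succ (i j k t : Fin 6) :
    rt i j k t.succ = if t = i ∨ t = j ∨ t = k then -1 else 0 := by
  simp [rt, Fin.succ_ne_zero, Fin.succ_inj]

lemma ip_rt (L : Lam) (i j k : Fin 6) (hij : i ≠ j) (hik : i ≠ k) (hjk : j ≠ k) :
    ip L (rt i j k) = L 0 + (L i.succ + L j.succ + L k.succ) := by
  unfold ip
  rw [rt_zero]
  have hsum : ∀ t : Fin 6, L t.succ * rt i j k t.succ =
      -((if t = i then L t.succ else 0) + (if t = j then L t.succ else 0)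
        + (if t = k then L t.succ else 0)) := by
    intro t
    rw [rt_succ]
    by_cases h1 : t = i <;> by_cases h2 : t = j <;> by_cases h3 : t = k <;> simp_all
  simp only [hsum]
  rw [Finset.sum_neg_distrib]
  rw [Finset.sum_add_distrib, Finset.sum_add_distrib]
  simp [Finset.sum_ite_eq']
  ring

lemma Kc_succ (t : Fin 6) : Kc t.succ = 1 := by fin_cases t <;> rfl

lemma rt_norm (i j k : Fin 6) (hij : i ≠ j) (hik : i ≠ k) (hjk : j ≠ k) :
    ip (rt i j k) (rt i j k) = -2 := by
  rw [ip_rt _ i j k hij hik hjk, rt_zero, rt_succ, rt_succ, rt_succ]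
  simp [hij, hik, hjk, hij.symm, hik.symm, hjk.symm]

lemma rt_K (i j k : Fin 6) (hij : i ≠ j) (hik : i ≠ k) (hjk : j ≠ k) :
    ip (rt i j k) Kc = 0 := by
  rw [ip_comm, ip_rt _ i j k hij hik hjk, Kc_succ, Kc_succ, Kc_succ]
  have : Kc 0 = -3 := rfl
  rw [this]; ring

lemma root_exists (L : Lam) (i j k : Fin 6) (hij : i ≠ j) (hik : i ≠ k) (hjk : j ≠ k)
    (h : L 0 + (L i.succ + L j.succ + L k.succ) ≤ -1) :
    ∃ r : Lam, ip r r = -2 ∧ ip r Kc = 0 ∧ ip L r ≤ -1 ∧ r 0 = 1 :=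
  ⟨rt i j k, rt_norm i j k hij hik hjk, rt_K i j k hij hik hjk,
    by rw [ip_rt L i j k hij hik hjk]; exact h, rfl⟩

lemma succ_0 : (0 : Fin 6).succ = (1 : Fin 7) := rfl
lemma succ_1 : (1 : Fin 6).succ = (2 : Fin 7) := rfl
lemma succ_2 : (2 : Fin 6).succ = (3 : Fin 7) := rfl
lemma succ_3 : (3 : Fin 6).succ = (4 : Fin 7) := rfl
lemma succ_4 : (4 : Fin 6).succ = (5 : Fin 7) := rfl
lemma succ_5 : (5 : Fin 6).succ = (6 : Fin 7) := rfl

lemma int_consec_nonneg (a : ℤ) : 0 ≤ a * (a + 1) := by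
  rcases le_or_gt 0 a with h|h
  · nlinarith
  · nlinarith

lemma sq_le_two (x : ℤ) (h : x*x ≤ 2) : -1 ≤ x ∧ x ≤ 1 := by
  constructor <;> nlinarith

lemma L0_key (L : Lam)
    (h1 : L 0 * L 0 - (L 1 * L 1 + L 2 * L 2 + L 3 * L 3 + L 4 * L 4 + L 5 * L 5 + L 6 * L 6) = 1)
    (hK : -3 * L 0 - (L 1 + L 2 + L 3 + L 4 + L 5 + L 6) = -3) :
    (L 0 - 1) * (5 - L 0) ≥ 0 := by
  nlinarith [sq_nonneg (L 1 - L 2), sq_nonneg (L 1 - L 3), sq_nonneg (L 1 - L 4),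
    sq_nonneg (L 1 - L 5), sq_nonneg (L 1 - L 6), sq_nonneg (L 2 - L 3),
    sq_nonneg (L 2 - L 4), sq_nonneg (L 2 - L 5), sq_nonneg (L 2 - L 6),
    sq_nonneg (L 3 - L 4), sq_nonneg (L 3 - L 5), sq_nonneg (L 3 - L 6),
    sq_nonneg (L 4 - L 5), sq_nonneg (L 4 - L 6), sq_nonneg (L 5 - L 6)]

lemma L0_bound (L : Lam) (h1 : ip L L = 1) (hK : ip L Kc = -3) :
    1 ≤ L 0 ∧ L 0 ≤ 5 := by
  rw [ip_expand] at h1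
  rw [ip_Kc_expand] at hK
  have key := L0_key L h1 hK
  constructor <;> nlinarith [key]

lemma find_root (L : Lam) (h1 : ip L L = 1) (hK : ip L Kc = -3) (h2a : 2 ≤ L 0) :
    ∃ r : Lam, ip r r = -2 ∧ ip r Kc = 0 ∧ ip L r ≤ -1 ∧ r 0 = 1 := by
  have h5a : L 0 ≤ 5 := (L0_bound L h1 hK).2
  rw [ip_expand] at h1
  rw [ip_Kc_expand] at hK
  obtain ⟨q1, hq1⟩ : ∃ q, L 1 * L 1 = q := ⟨_, rfl⟩
  rw [hq1] at h1
  obtain ⟨q2, hq2⟩ : ∃ q, L 2 * L 2 = q := ⟨_, rfl⟩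
  rw [hq2] at h1
  obtain ⟨q3, hq3⟩ : ∃ q, L 3 * L 3 = q := ⟨_, rfl⟩
  rw [hq3] at h1
  obtain ⟨q4, hq4⟩ : ∃ q, L 4 * L 4 = q := ⟨_, rfl⟩
  rw [hq4] at h1
  obtain ⟨q5, hq5⟩ : ∃ q, L 5 * L 5 = q := ⟨_, rfl⟩
  rw [hq5] at h1
  obtain ⟨q6, hq6⟩ : ∃ q, L 6 * L 6 = q := ⟨_, rfl⟩
  rw [hq6] at h1
  obtain ⟨a, ha⟩ : ∃ a, L 0 = a := ⟨_, rfl⟩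
  rw [ha] at h1 hK h2a h5a
  interval_cases a
  · -- a = 2
    have id1 : L 1 * (L 1 + 1) = q1 + L 1 := by rw [← hq1]; ring
    have n1 := int_consec_nonneg (L 1)
    have id2 : L 2 * (L 2 + 1) = q2 + L 2 := by rw [← hq2]; ring
    have n2 := int_consec_nonneg (L 2)
    have id3 : L 3 * (L 3 + 1) = q3 + L 3 := by rw [← hq3]; ring
    have n3 := int_consec_nonneg (L 3)
    have id4 : L 4 * (L 4 + 1) = q4 + L 4 := by rw [← hq4]; ring
    have n4 := int_consec_nonneg (L 4)
    have id5 : L 5 * (L 5 + 1) = q5 + L 5 := by rw [← hq5]; ring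
    have n5 := int_consec_nonneg (L 5)
    have id6 : L 6 * (L 6 + 1) = q6 + L 6 := by rw [← hq6]; ring
    have n6 := int_consec_nonneg (L 6)
    have z1 : L 1 * (L 1 + 1) = 0 := by linarith
    have z2 : L 2 * (L 2 + 1) = 0 := by linarith
    have z3 : L 3 * (L 3 + 1) = 0 := by linarith
    have z4 : L 4 * (L 4 + 1) = 0 := by linarith
    have z5 : L 5 * (L 5 + 1) = 0 := by linarith
    have z6 : L 6 * (L 6 + 1) = 0 := by linarith
    have c1 : (L 1 = -1 ∧ q1 = 1) ∨ (L 1 = 0 ∧ q1 = 0) := by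
      rcases mul_eq_zero.mp z1 with h|h
      · exact Or.inr ⟨h, by rw [h] at hq1; omega⟩
      · have hb : L 1 = -1 := by omega
        exact Or.inl ⟨hb, by rw [hb] at hq1; omega⟩
    have c2 : (L 2 = -1 ∧ q2 = 1) ∨ (L 2 = 0 ∧ q2 = 0) := by
      rcases mul_eq_zero.mp z2 with h|h
      · exact Or.inr ⟨h, by rw [h] at hq2; omega⟩
      · have hb : L 2 = -1 := by omega
        exact Or.inl ⟨hb, by rw [hb] at hq2; omega⟩
    have c3 : (L 3 = -1 ∧ q3 = 1) ∨ (L 3 = 0 ∧ q3 = 0) := by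
      rcases mul_eq_zero.mp z3 with h|h
      · exact Or.inr ⟨h, by rw [h] at hq3; omega⟩
      · have hb : L 3 = -1 := by omega
        exact Or.inl ⟨hb, by rw [hb] at hq3; omega⟩
    have c4 : (L 4 = -1 ∧ q4 = 1) ∨ (L 4 = 0 ∧ q4 = 0) := by
      rcases mul_eq_zero.mp z4 with h|h
      · exact Or.inr ⟨h, by rw [h] at hq4; omega⟩
      · have hb : L 4 = -1 := by omega
        exact Or.inl ⟨hb, by rw [hb] at hq4; omega⟩
    have c5 : (L 5 = -1 ∧ q5 = 1) ∨ (L 5 = 0 ∧ q5 = 0) := by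
      rcases mul_eq_zero.mp z5 with h|h
      · exact Or.inr ⟨h, by rw [h] at hq5; omega⟩
      · have hb : L 5 = -1 := by omega
        exact Or.inl ⟨hb, by rw [hb] at hq5; omega⟩
    have c6 : (L 6 = -1 ∧ q6 = 1) ∨ (L 6 = 0 ∧ q6 = 0) := by
      rcases mul_eq_zero.mp z6 with h|h
      · exact Or.inr ⟨h, by rw [h] at hq6; omega⟩
      · have hb : L 6 = -1 := by omega
        exact Or.inl ⟨hb, by rw [hb] at hq6; omega⟩
    clear id1 n1 z1 hq1 id2 n2 z2 hq2 id3 n3 z3 hq3 id4 n4 z4 hq4 id5 n5 z5 hq5 id6 n6 z6 hq6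
    rcases c1 with ⟨hb1, hc1⟩|⟨hb1, hc1⟩ <;> rcases c2 with ⟨hb2, hc2⟩|⟨hb2, hc2⟩ <;> rcases c3 with ⟨hb3, hc3⟩|⟨hb3, hc3⟩ <;> rcases c4 with ⟨hb4, hc4⟩|⟨hb4, hc4⟩ <;> rcases c5 with ⟨hb5, hc5⟩|⟨hb5, hc5⟩ <;> rcases c6 with ⟨hb6, hc6⟩|⟨hb6, hc6⟩ <;>
    first
      | omega
      | exact root_exists L 0 1 2 (by decide) (by decide) (by decide) (by simp only [succ_0, succ_1, succ_2, succ_3, succ_4, succ_5]; omega)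
      | exact root_exists L 0 1 3 (by decide) (by decide) (by decide) (by simp only [succ_0, succ_1, succ_2, succ_3, succ_4, succ_5]; omega)
      | exact root_exists L 0 1 4 (by decide) (by decide) (by decide) (by simp only [succ_0, succ_1, succ_2, succ_3, succ_4, succ_5]; omega)
      | exact root_exists L 0 1 5 (by decide) (by decide) (by decide) (by simp only [succ_0, succ_1, succ_2, succ_3, succ_4, succ_5]; omega)
      | exact root_exists L 0 2 3 (by decide) (by decide) (by decide) (by simp only [succ_0, succ_1, succ_2, succ_3, succ_4, succ_5]; omega)
      | exact root_exists L 0 2 4 (by decide) (by decide) (by decide) (by simp only [succ_0, succ_1, succ_2, succ_3, succ_4, succ_5]; omega)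
      | exact root_exists L 0 2 5 (by decide) (by decide) (by decide) (by simp only [succ_0, succ_1, succ_2, succ_3, succ_4, succ_5]; omega)
      | exact root_exists L 0 3 4 (by decide) (by decide) (by decide) (by simp only [succ_0, succ_1, succ_2, succ_3, succ_4, succ_5]; omega)
      | exact root_exists L 0 3 5 (by decide) (by decide) (by decide) (by simp only [succ_0, succ_1, succ_2, succ_3, succ_4, succ_5]; omega)
      | exact root_exists L 0 4 5 (by decide) (by decide) (by decide) (by simp only [succ_0, succ_1, succ_2, succ_3, succ_4, succ_5]; omega)
      | exact root_exists L 1 2 3 (by decide) (by decide) (by decide) (by simp only [succ_0, succ_1, succ_2, succ_3, succ_4, succ_5]; omega)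
      | exact root_exists L 1 2 4 (by decide) (by decide) (by decide) (by simp only [succ_0, succ_1, succ_2, succ_3, succ_4, succ_5]; omega)
      | exact root_exists L 1 2 5 (by decide) (by decide) (by decide) (by simp only [succ_0, succ_1, succ_2, succ_3, succ_4, succ_5]; omega)
      | exact root_exists L 1 3 4 (by decide) (by decide) (by decide) (by simp only [succ_0, succ_1, succ_2, succ_3, succ_4, succ_5]; omega)
      | exact root_exists L 1 3 5 (by decide) (by decide) (by decide) (by simp only [succ_0, succ_1, succ_2, succ_3, succ_4, succ_5]; omega)
      | exact root_exists L 1 4 5 (by decide) (by decide) (by decide) (by simp only [succ_0, succ_1, succ_2, succ_3, succ_4, succ_5]; omega)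
      | exact root_exists L 2 3 4 (by decide) (by decide) (by decide) (by simp only [succ_0, succ_1, succ_2, succ_3, succ_4, succ_5]; omega)
      | exact root_exists L 2 3 5 (by decide) (by decide) (by decide) (by simp only [succ_0, succ_1, succ_2, succ_3, succ_4, succ_5]; omega)
      | exact root_exists L 2 4 5 (by decide) (by decide) (by decide) (by simp only [succ_0, succ_1, succ_2, succ_3, succ_4, succ_5]; omega)
      | exact root_exists L 3 4 5 (by decide) (by decide) (by decide) (by simp only [succ_0, succ_1, succ_2, succ_3, succ_4, succ_5]; omega)
  · -- a = 3
    have id1 : (L 1 + 1) * (L 1 + 1) = q1 + 2 * L 1 + 1 := by rw [← hq1]; ring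
    have n1 := mul_self_nonneg (L 1 + 1)
    have id2 : (L 2 + 1) * (L 2 + 1) = q2 + 2 * L 2 + 1 := by rw [← hq2]; ring
    have n2 := mul_self_nonneg (L 2 + 1)
    have id3 : (L 3 + 1) * (L 3 + 1) = q3 + 2 * L 3 + 1 := by rw [← hq3]; ring
    have n3 := mul_self_nonneg (L 3 + 1)
    have id4 : (L 4 + 1) * (L 4 + 1) = q4 + 2 * L 4 + 1 := by rw [← hq4]; ring
    have n4 := mul_self_nonneg (L 4 + 1)
    have id5 : (L 5 + 1) * (L 5 + 1) = q5 + 2 * L 5 + 1 := by rw [← hq5]; ring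
    have n5 := mul_self_nonneg (L 5 + 1)
    have id6 : (L 6 + 1) * (L 6 + 1) = q6 + 2 * L 6 + 1 := by rw [← hq6]; ring
    have n6 := mul_self_nonneg (L 6 + 1)
    have u1 : (L 1 + 1) * (L 1 + 1) ≤ 2 := by linarith
    have w1 := sq_le_two _ u1
    have u2 : (L 2 + 1) * (L 2 + 1) ≤ 2 := by linarith
    have w2 := sq_le_two _ u2
    have u3 : (L 3 + 1) * (L 3 + 1) ≤ 2 := by linarith
    have w3 := sq_le_two _ u3
    have u4 : (L 4 + 1) * (L 4 + 1) ≤ 2 := by linarith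
    have w4 := sq_le_two _ u4
    have u5 : (L 5 + 1) * (L 5 + 1) ≤ 2 := by linarith
    have w5 := sq_le_two _ u5
    have u6 : (L 6 + 1) * (L 6 + 1) ≤ 2 := by linarith
    have w6 := sq_le_two _ u6
    have c1 : (L 1 = -2 ∧ q1 = 4) ∨ (L 1 = -1 ∧ q1 = 1) ∨ (L 1 = 0 ∧ q1 = 0) := by
      obtain ⟨w1, w2⟩ := w1
      have tri : L 1 = -2 ∨ L 1 = -1 ∨ L 1 = 0 := by omega
      rcases tri with h|h|h
      · exact Or.inl ⟨h, by rw [h] at hq1; omega⟩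
      · exact Or.inr (Or.inl ⟨h, by rw [h] at hq1; omega⟩)
      · exact Or.inr (Or.inr ⟨h, by rw [h] at hq1; omega⟩)
    have c2 : (L 2 = -2 ∧ q2 = 4) ∨ (L 2 = -1 ∧ q2 = 1) ∨ (L 2 = 0 ∧ q2 = 0) := by
      obtain ⟨w1, w2⟩ := w2
      have tri : L 2 = -2 ∨ L 2 = -1 ∨ L 2 = 0 := by omega
      rcases tri with h|h|h
      · exact Or.inl ⟨h, by rw [h] at hq2; omega⟩
      · exact Or.inr (Or.inl ⟨h, by rw [h] at hq2; omega⟩)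
      · exact Or.inr (Or.inr ⟨h, by rw [h] at hq2; omega⟩)
    have c3 : (L 3 = -2 ∧ q3 = 4) ∨ (L 3 = -1 ∧ q3 = 1) ∨ (L 3 = 0 ∧ q3 = 0) := by
      obtain ⟨w1, w2⟩ := w3
      have tri : L 3 = -2 ∨ L 3 = -1 ∨ L 3 = 0 := by omega
      rcases tri with h|h|h
      · exact Or.inl ⟨h, by rw [h] at hq3; omega⟩
      · exact Or.inr (Or.inl ⟨h, by rw [h] at hq3; omega⟩)
      · exact Or.inr (Or.inr ⟨h, by rw [h] at hq3; omega⟩)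
    have c4 : (L 4 = -2 ∧ q4 = 4) ∨ (L 4 = -1 ∧ q4 = 1) ∨ (L 4 = 0 ∧ q4 = 0) := by
      obtain ⟨w1, w2⟩ := w4
      have tri : L 4 = -2 ∨ L 4 = -1 ∨ L 4 = 0 := by omega
      rcases tri with h|h|h
      · exact Or.inl ⟨h, by rw [h] at hq4; omega⟩
      · exact Or.inr (Or.inl ⟨h, by rw [h] at hq4; omega⟩)
      · exact Or.inr (Or.inr ⟨h, by rw [h] at hq4; omega⟩)
    have c5 : (L 5 = -2 ∧ q5 = 4) ∨ (L 5 = -1 ∧ q5 = 1) ∨ (L 5 = 0 ∧ q5 = 0) := by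
      obtain ⟨w1, w2⟩ := w5
      have tri : L 5 = -2 ∨ L 5 = -1 ∨ L 5 = 0 := by omega
      rcases tri with h|h|h
      · exact Or.inl ⟨h, by rw [h] at hq5; omega⟩
      · exact Or.inr (Or.inl ⟨h, by rw [h] at hq5; omega⟩)
      · exact Or.inr (Or.inr ⟨h, by rw [h] at hq5; omega⟩)
    have c6 : (L 6 = -2 ∧ q6 = 4) ∨ (L 6 = -1 ∧ q6 = 1) ∨ (L 6 = 0 ∧ q6 = 0) := by
      obtain ⟨w1, w2⟩ := w6
      have tri : L 6 = -2 ∨ L 6 = -1 ∨ L 6 = 0 := by omega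
      rcases tri with h|h|h
      · exact Or.inl ⟨h, by rw [h] at hq6; omega⟩
      · exact Or.inr (Or.inl ⟨h, by rw [h] at hq6; omega⟩)
      · exact Or.inr (Or.inr ⟨h, by rw [h] at hq6; omega⟩)
    clear id1 n1 u1 w1 hq1 id2 n2 u2 w2 hq2 id3 n3 u3 w3 hq3 id4 n4 u4 w4 hq4 id5 n5 u5 w5 hq5 id6 n6 u6 w6 hq6
    rcases c1 with ⟨hb1, hc1⟩|⟨hb1, hc1⟩|⟨hb1, hc1⟩ <;> rcases c2 with ⟨hb2, hc2⟩|⟨hb2, hc2⟩|⟨hb2, hc2⟩ <;> rcases c3 with ⟨hb3, hc3⟩|⟨hb3, hc3⟩|⟨hb3, hc3⟩ <;> rcases c4 with ⟨hb4, hc4⟩|⟨hb4, hc4⟩|⟨hb4, hc4⟩ <;> rcases c5 with ⟨hb5, hc5⟩|⟨hb5, hc5⟩|⟨hb5, hc5⟩ <;> rcases c6 with ⟨hb6, hc6⟩|⟨hb6, hc6⟩|⟨hb6, hc6⟩ <;>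
    first
      | omega
      | exact root_exists L 0 1 2 (by decide) (by decide) (by decide) (by simp only [succ_0, succ_1, succ_2, succ_3, succ_4, succ_5]; omega)
      | exact root_exists L 0 1 3 (by decide) (by decide) (by decide) (by simp only [succ_0, succ_1, succ_2, succ_3, succ_4, succ_5]; omega)
      | exact root_exists L 0 1 4 (by decide) (by decide) (by decide) (by simp only [succ_0, succ_1, succ_2, succ_3, succ_4, succ_5]; omega)
      | exact root_exists L 0 1 5 (by decide) (by decide) (by decide) (by simp only [succ_0, succ_1, succ_2, succ_3, succ_4, succ_5]; omega)
      | exact root_exists L 0 2 3 (by decide) (by decide) (by decide) (by simp only [succ_0, succ_1, succ_2, succ_3, succ_4, succ_5]; omega)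
      | exact root_exists L 0 2 4 (by decide) (by decide) (by decide) (by simp only [succ_0, succ_1, succ_2, succ_3, succ_4, succ_5]; omega)
      | exact root_exists L 0 2 5 (by decide) (by decide) (by decide) (by simp only [succ_0, succ_1, succ_2, succ_3, succ_4, succ_5]; omega)
      | exact root_exists L 0 3 4 (by decide) (by decide) (by decide) (by simp only [succ_0, succ_1, succ_2, succ_3, succ_4, succ_5]; omega)
      | exact root_exists L 0 3 5 (by decide) (by decide) (by decide) (by simp only [succ_0, succ_1, succ_2, succ_3, succ_4, succ_5]; omega)
      | exact root_exists L 0 4 5 (by decide) (by decide) (by decide) (by simp only [succ_0, succ_1, succ_2, succ_3, succ_4, succ_5]; omega)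
      | exact root_exists L 1 2 3 (by decide) (by decide) (by decide) (by simp only [succ_0, succ_1, succ_2, succ_3, succ_4, succ_5]; omega)
      | exact root_exists L 1 2 4 (by decide) (by decide) (by decide) (by simp only [succ_0, succ_1, succ_2, succ_3, succ_4, succ_5]; omega)
      | exact root_exists L 1 2 5 (by decide) (by decide) (by decide) (by simp only [succ_0, succ_1, succ_2, succ_3, succ_4, succ_5]; omega)
      | exact root_exists L 1 3 4 (by decide) (by decide) (by decide) (by simp only [succ_0, succ_1, succ_2, succ_3, succ_4, succ_5]; omega)
      | exact root_exists L 1 3 5 (by decide) (by decide) (by decide) (by simp only [succ_0, succ_1, succ_2, succ_3, succ_4, succ_5]; omega)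
      | exact root_exists L 1 4 5 (by decide) (by decide) (by decide) (by simp only [succ_0, succ_1, succ_2, succ_3, succ_4, succ_5]; omega)
      | exact root_exists L 2 3 4 (by decide) (by decide) (by decide) (by simp only [succ_0, succ_1, succ_2, succ_3, succ_4, succ_5]; omega)
      | exact root_exists L 2 3 5 (by decide) (by decide) (by decide) (by simp only [succ_0, succ_1, succ_2, succ_3, succ_4, succ_5]; omega)
      | exact root_exists L 2 4 5 (by decide) (by decide) (by decide) (by simp only [succ_0, succ_1, succ_2, succ_3, succ_4, succ_5]; omega)
      | exact root_exists L 3 4 5 (by decide) (by decide) (by decide) (by simp only [succ_0, succ_1, succ_2, succ_3, succ_4, succ_5]; omega)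
  · -- a = 4
    have id1 : (L 1 + 1) * (L 1 + 2) = q1 + 3 * L 1 + 2 := by rw [← hq1]; ring
    have n1 : 0 ≤ (L 1 + 1) * (L 1 + 2) := by have := int_consec_nonneg (L 1 + 1); linarith [this]
    have id2 : (L 2 + 1) * (L 2 + 2) = q2 + 3 * L 2 + 2 := by rw [← hq2]; ring
    have n2 : 0 ≤ (L 2 + 1) * (L 2 + 2) := by have := int_consec_nonneg (L 2 + 1); linarith [this]
    have id3 : (L 3 + 1) * (L 3 + 2) = q3 + 3 * L 3 + 2 := by rw [← hq3]; ring
    have n3 : 0 ≤ (L 3 + 1) * (L 3 + 2) := by have := int_consec_nonneg (L 3 + 1); linarith [this]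
    have id4 : (L 4 + 1) * (L 4 + 2) = q4 + 3 * L 4 + 2 := by rw [← hq4]; ring
    have n4 : 0 ≤ (L 4 + 1) * (L 4 + 2) := by have := int_consec_nonneg (L 4 + 1); linarith [this]
    have id5 : (L 5 + 1) * (L 5 + 2) = q5 + 3 * L 5 + 2 := by rw [← hq5]; ring
    have n5 : 0 ≤ (L 5 + 1) * (L 5 + 2) := by have := int_consec_nonneg (L 5 + 1); linarith [this]
    have id6 : (L 6 + 1) * (L 6 + 2) = q6 + 3 * L 6 + 2 := by rw [← hq6]; ring
    have n6 : 0 ≤ (L 6 + 1) * (L 6 + 2) := by have := int_consec_nonneg (L 6 + 1); linarith [this]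
    have z1 : (L 1 + 1) * (L 1 + 2) = 0 := by linarith
    have z2 : (L 2 + 1) * (L 2 + 2) = 0 := by linarith
    have z3 : (L 3 + 1) * (L 3 + 2) = 0 := by linarith
    have z4 : (L 4 + 1) * (L 4 + 2) = 0 := by linarith
    have z5 : (L 5 + 1) * (L 5 + 2) = 0 := by linarith
    have z6 : (L 6 + 1) * (L 6 + 2) = 0 := by linarith
    have c1 : (L 1 = -2 ∧ q1 = 4) ∨ (L 1 = -1 ∧ q1 = 1) := by
      rcases mul_eq_zero.mp z1 with h|h
      · have hb : L 1 = -1 := by omega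
        exact Or.inr ⟨hb, by rw [hb] at hq1; omega⟩
      · have hb : L 1 = -2 := by omega
        exact Or.inl ⟨hb, by rw [hb] at hq1; omega⟩
    have c2 : (L 2 = -2 ∧ q2 = 4) ∨ (L 2 = -1 ∧ q2 = 1) := by
      rcases mul_eq_zero.mp z2 with h|h
      · have hb : L 2 = -1 := by omega
        exact Or.inr ⟨hb, by rw [hb] at hq2; omega⟩
      · have hb : L 2 = -2 := by omega
        exact Or.inl ⟨hb, by rw [hb] at hq2; omega⟩
    have c3 : (L 3 = -2 ∧ q3 = 4) ∨ (L 3 = -1 ∧ q3 = 1) := by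
      rcases mul_eq_zero.mp z3 with h|h
      · have hb : L 3 = -1 := by omega
        exact Or.inr ⟨hb, by rw [hb] at hq3; omega⟩
      · have hb : L 3 = -2 := by omega
        exact Or.inl ⟨hb, by rw [hb] at hq3; omega⟩
    have c4 : (L 4 = -2 ∧ q4 = 4) ∨ (L 4 = -1 ∧ q4 = 1) := by
      rcases mul_eq_zero.mp z4 with h|h
      · have hb : L 4 = -1 := by omega
        exact Or.inr ⟨hb, by rw [hb] at hq4; omega⟩
      · have hb : L 4 = -2 := by omega
        exact Or.inl ⟨hb, by rw [hb] at hq4; omega⟩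
    have c5 : (L 5 = -2 ∧ q5 = 4) ∨ (L 5 = -1 ∧ q5 = 1) := by
      rcases mul_eq_zero.mp z5 with h|h
      · have hb : L 5 = -1 := by omega
        exact Or.inr ⟨hb, by rw [hb] at hq5; omega⟩
      · have hb : L 5 = -2 := by omega
        exact Or.inl ⟨hb, by rw [hb] at hq5; omega⟩
    have c6 : (L 6 = -2 ∧ q6 = 4) ∨ (L 6 = -1 ∧ q6 = 1) := by
      rcases mul_eq_zero.mp z6 with h|h
      · have hb : L 6 = -1 := by omega
        exact Or.inr ⟨hb, by rw [hb] at hq6; omega⟩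
      · have hb : L 6 = -2 := by omega
        exact Or.inl ⟨hb, by rw [hb] at hq6; omega⟩
    clear id1 n1 z1 hq1 id2 n2 z2 hq2 id3 n3 z3 hq3 id4 n4 z4 hq4 id5 n5 z5 hq5 id6 n6 z6 hq6
    rcases c1 with ⟨hb1, hc1⟩|⟨hb1, hc1⟩ <;> rcases c2 with ⟨hb2, hc2⟩|⟨hb2, hc2⟩ <;> rcases c3 with ⟨hb3, hc3⟩|⟨hb3, hc3⟩ <;> rcases c4 with ⟨hb4, hc4⟩|⟨hb4, hc4⟩ <;> rcases c5 with ⟨hb5, hc5⟩|⟨hb5, hc5⟩ <;> rcases c6 with ⟨hb6, hc6⟩|⟨hb6, hc6⟩ <;>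
    first
      | omega
      | exact root_exists L 0 1 2 (by decide) (by decide) (by decide) (by simp only [succ_0, succ_1, succ_2, succ_3, succ_4, succ_5]; omega)
      | exact root_exists L 0 1 3 (by decide) (by decide) (by decide) (by simp only [succ_0, succ_1, succ_2, succ_3, succ_4, succ_5]; omega)
      | exact root_exists L 0 1 4 (by decide) (by decide) (by decide) (by simp only [succ_0, succ_1, succ_2, succ_3, succ_4, succ_5]; omega)
      | exact root_exists L 0 1 5 (by decide) (by decide) (by decide) (by simp only [succ_0, succ_1, succ_2, succ_3, succ_4, succ_5]; omega)
      | exact root_exists L 0 2 3 (by decide) (by decide) (by decide) (by simp only [succ_0, succ_1, succ_2, succ_3, succ_4, succ_5]; omega)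
      | exact root_exists L 0 2 4 (by decide) (by decide) (by decide) (by simp only [succ_0, succ_1, succ_2, succ_3, succ_4, succ_5]; omega)
      | exact root_exists L 0 2 5 (by decide) (by decide) (by decide) (by simp only [succ_0, succ_1, succ_2, succ_3, succ_4, succ_5]; omega)
      | exact root_exists L 0 3 4 (by decide) (by decide) (by decide) (by simp only [succ_0, succ_1, succ_2, succ_3, succ_4, succ_5]; omega)
      | exact root_exists L 0 3 5 (by decide) (by decide) (by decide) (by simp only [succ_0, succ_1, succ_2, succ_3, succ_4, succ_5]; omega)
      | exact root_exists L 0 4 5 (by decide) (by decide) (by decide) (by simp only [succ_0, succ_1, succ_2, succ_3, succ_4, succ_5]; omega)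
      | exact root_exists L 1 2 3 (by decide) (by decide) (by decide) (by simp only [succ_0, succ_1, succ_2, succ_3, succ_4, succ_5]; omega)
      | exact root_exists L 1 2 4 (by decide) (by decide) (by decide) (by simp only [succ_0, succ_1, succ_2, succ_3, succ_4, succ_5]; omega)
      | exact root_exists L 1 2 5 (by decide) (by decide) (by decide) (by simp only [succ_0, succ_1, succ_2, succ_3, succ_4, succ_5]; omega)
      | exact root_exists L 1 3 4 (by decide) (by decide) (by decide) (by simp only [succ_0, succ_1, succ_2, succ_3, succ_4, succ_5]; omega)
      | exact root_exists L 1 3 5 (by decide) (by decide) (by decide) (by simp only [succ_0, succ_1, succ_2, succ_3, succ_4, succ_5]; omega)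
      | exact root_exists L 1 4 5 (by decide) (by decide) (by decide) (by simp only [succ_0, succ_1, succ_2, succ_3, succ_4, succ_5]; omega)
      | exact root_exists L 2 3 4 (by decide) (by decide) (by decide) (by simp only [succ_0, succ_1, succ_2, succ_3, succ_4, succ_5]; omega)
      | exact root_exists L 2 3 5 (by decide) (by decide) (by decide) (by simp only [succ_0, succ_1, succ_2, succ_3, succ_4, succ_5]; omega)
      | exact root_exists L 2 4 5 (by decide) (by decide) (by decide) (by simp only [succ_0, succ_1, succ_2, succ_3, succ_4, succ_5]; omega)
      | exact root_exists L 3 4 5 (by decide) (by decide) (by decide) (by simp only [succ_0, succ_1, succ_2, succ_3, succ_4, succ_5]; omega)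
  · -- a = 5
    have id1 : (L 1 + 2) * (L 1 + 2) = q1 + 4 * L 1 + 4 := by rw [← hq1]; ring
    have n1 := mul_self_nonneg (L 1 + 2)
    have id2 : (L 2 + 2) * (L 2 + 2) = q2 + 4 * L 2 + 4 := by rw [← hq2]; ring
    have n2 := mul_self_nonneg (L 2 + 2)
    have id3 : (L 3 + 2) * (L 3 + 2) = q3 + 4 * L 3 + 4 := by rw [← hq3]; ring
    have n3 := mul_self_nonneg (L 3 + 2)
    have id4 : (L 4 + 2) * (L 4 + 2) = q4 + 4 * L 4 + 4 := by rw [← hq4]; ring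
    have n4 := mul_self_nonneg (L 4 + 2)
    have id5 : (L 5 + 2) * (L 5 + 2) = q5 + 4 * L 5 + 4 := by rw [← hq5]; ring
    have n5 := mul_self_nonneg (L 5 + 2)
    have id6 : (L 6 + 2) * (L 6 + 2) = q6 + 4 * L 6 + 4 := by rw [← hq6]; ring
    have n6 := mul_self_nonneg (L 6 + 2)
    have z1 : (L 1 + 2) * (L 1 + 2) = 0 := by linarith
    have z2 : (L 2 + 2) * (L 2 + 2) = 0 := by linarith
    have z3 : (L 3 + 2) * (L 3 + 2) = 0 := by linarith
    have z4 : (L 4 + 2) * (L 4 + 2) = 0 := by linarith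
    have z5 : (L 5 + 2) * (L 5 + 2) = 0 := by linarith
    have z6 : (L 6 + 2) * (L 6 + 2) = 0 := by linarith
    have hb1 : L 1 = -2 := by have := mul_self_eq_zero.mp z1; omega
    have hb2 : L 2 = -2 := by have := mul_self_eq_zero.mp z2; omega
    have hb3 : L 3 = -2 := by have := mul_self_eq_zero.mp z3; omega
    have hb4 : L 4 = -2 := by have := mul_self_eq_zero.mp z4; omega
    have hb5 : L 5 = -2 := by have := mul_self_eq_zero.mp z5; omega
    have hb6 : L 6 = -2 := by have := mul_self_eq_zero.mp z6; omega
    exact root_exists L 0 1 2 (by decide) (by decide) (by decide)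
      (by simp only [succ_0, succ_1, succ_2]; omega)

lemma L_eq_hv (L : Lam) (h1 : ip L L = 1) (hK : ip L Kc = -3) (h0 : L 0 = 1) : L = hv := by
  rw [ip_expand, h0] at h1
  rw [ip_Kc_expand, h0] at hK
  have n1 := mul_self_nonneg (L 1)
  have n2 := mul_self_nonneg (L 2)
  have n3 := mul_self_nonneg (L 3)
  have n4 := mul_self_nonneg (L 4)
  have n5 := mul_self_nonneg (L 5)
  have n6 := mul_self_nonneg (L 6)
  have z1 : L 1 = 0 := mul_self_eq_zero.mp (by linarith)
  have z2 : L 2 = 0 := mul_self_eq_zero.mp (by linarith)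
  have z3 : L 3 = 0 := mul_self_eq_zero.mp (by linarith)
  have z4 : L 4 = 0 := mul_self_eq_zero.mp (by linarith)
  have z5 : L 5 = 0 := mul_self_eq_zero.mp (by linarith)
  have z6 : L 6 = 0 := mul_self_eq_zero.mp (by linarith)
  exact lam_ext L hv (by rw [h0]; rfl) (by rw [z1]; rfl) (by rw [z2]; rfl)
    (by rw [z3]; rfl) (by rw [z4]; rfl) (by rw [z5]; rfl) (by rw [z6]; rfl)

lemma P_all : ∀ n : ℕ, ∀ L : Lam, ip L L = 1 → ip L Kc = -3 → (L 0).toNat ≤ n → P L := by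
  intro n
  induction n with
  | zero =>
    intro L h1 hK hn
    have hb := L0_bound L h1 hK
    omega
  | succ n ih =>
    intro L h1 hK hn
    have hb := L0_bound L h1 hK
    by_cases hc : L 0 = 1
    · rw [L_eq_hv L h1 hK hc]; exact P_hv
    · obtain ⟨r, hr2, hrK, hneg, hr0⟩ := find_root L h1 hK (by omega)
      apply P_refl hr2 hrK
      have hval : (refl r L) 0 = L 0 + ip L r := by
        show (L + ip L r • r) 0 = _
        simp [Pi.add_apply, Pi.smul_apply, smul_eq_mul, hr0]
      have hrL1 : ip (refl r L) (refl r L) = 1 := by rw [ip_refl_refl hr2]; exact h1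
      have hrLK : ip (refl r L) Kc = -3 := by rw [ip_refl_Kc hr2 hrK]; exact hK
      have hb2 := L0_bound _ hrL1 hrLK
      exact ih _ hrL1 hrLK (by omega)

end Cubic

/-- For L with ⟨L,L⟩ = 1, ⟨L,K⟩ = −3 and all D₁, D₂:
⟨D₁,D₂⟩L + Σ_{(E,F): E+F=L} ⟨E,D₁⟩⟨E,D₂⟩·F = ⟨L,D₁⟩D₂ + Σ_{(E,F): E+F=L} ⟨F,D₁⟩⟨E,D₂⟩·E,
where E ranges over line classes and F over fiber classes. -/
theorem assoc_identity_L :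
    ∀ L : Lam, ip L L = 1 → ip L Kc = -3 →
    {p : Lam × Lam | IsLine p.1 ∧ IsFiber p.2 ∧ p.1 + p.2 = L}.Finite ∧
    ∀ D₁ D₂ : Lam,
      ip D₁ D₂ • L +
        ∑ᶠ p ∈ {p : Lam × Lam | IsLine p.1 ∧ IsFiber p.2 ∧ p.1 + p.2 = L},
          (ip p.1 D₁ * ip p.1 D₂) • p.2 =
      ip L D₁ • D₂ +
        ∑ᶠ p ∈ {p : Lam × Lam | IsLine p.1 ∧ IsFiber p.2 ∧ p.1 + p.2 = L},
          (ip p.2 D₁ * ip p.1 D₂) • p.1 := by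
  intro L h1 hK
  exact Cubic.P_all (L 0).toNat L h1 hK le_rfl
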